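/- The polynomial f(s) = 2s^6 + 6s^5 + 12s^4 + 16s^3 + 12s^2 + 10s + 1 is Hurwitz stable, but the truncation f_0(s) = 6s^5 + 12s^4 + 16s^3 + 12s^2 + 10s + 1 obtained by removing the leading term is not Hurwitz stable. -/

import Mathlib

/-- A real polynomial is Hurwitz stable if all its complex zeros have negative real parts. -/
def HurwitzStable (f : Polynomial ℝ) : Prop :=
  ∀ z : ℂ, Polynomial.aeval z f = 0 → z.re < 0

private def resPoly (x : ℝ) : ℝ :=
  108*x^11+972*x^10+4320*x^9+12312*x^8+24444*x^7+35190*x^6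
    +37610*x^5+30072*x^4+17436*x^3+6484*x^2+1069*x-43

open Complex in
private lemma stable_part (z : ℂ)
    (hz : 1 + 10*z + 12*z^2 + 16*z^3 + 12*z^4 + 6*z^5 + 2*z^6 = 0) : z.re < 0 := by
  by_contra hx
  push_neg at hx
  rcases eq_or_lt_of_le hx with h0 | h0
  · -- purely imaginary root: impossible
    have hcz : (starRingEnd ℂ) z = -z := by
      apply Complex.ext <;> simp [← h0]
    have h2 : 1 - 10*z + 12*z^2 - 16*z^3 + 12*z^4 - 6*z^5 + 2*z^6 = 0 := by
      have := congrArg (starRingEnd ℂ) hz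
      simp only [map_add, map_mul, map_pow, map_one, map_ofNat, map_zero, hcz] at this
      linear_combination this
    have hO : 2*z*((z^2+1)*(3*z^2+5)) = 0 := by linear_combination (hz - h2)/2
    have hE : 1 + 12*z^2 + 12*z^4 + 2*z^6 = 0 := by linear_combination (hz + h2)/2
    rcases mul_eq_zero.mp hO with h | h
    · rcases mul_eq_zero.mp h with h' | h'
      · norm_num at h'
      · rw [h'] at hE; norm_num at hE
    · rcases mul_eq_zero.mp h with h' | h'
      · have : (-1 : ℂ) = 0 := by linear_combination hE - (2*z^4 + 10*z^2 + 2) * h'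
        norm_num at this
      · have : (137/27 : ℂ) = 0 := by
          linear_combination hE - ((2/3)*z^4 + (26/9)*z^2 - 22/27) * h'
        norm_num at this
  · -- root with positive real part: impossible by the Hermite certificate
    set w := (starRingEnd ℂ) z with hw
    have hFw : 1 + 10*w + 12*w^2 + 16*w^3 + 12*w^4 + 6*w^5 + 2*w^6 = 0 := by
      have := congrArg (starRingEnd ℂ) hz
      simpa [map_add, map_mul, map_pow, map_ofNat] using this
    have key : (1+10*z+12*z^2+16*z^3+12*z^4+6*z^5+2*z^6) * (1+10*w+12*w^2+16*w^3+12*w^4+6*w^5+2*w^6)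
      - (1-10*z+12*z^2-16*z^3+12*z^4-6*z^5+2*z^6) * (1-10*w+12*w^2-16*w^3+12*w^4-6*w^5+2*w^6)
      = (z+w) * ( 20*((1+(8/5)*z^2+(3/5)*z^4)*(1+(8/5)*w^2+(3/5)*w^4))
        + 208*((z+(57/52)*z^3+(5/26)*z^5)*(w+(57/52)*w^3+(5/26)*w^5))
        + (524/5)*((z^2+(106/131)*z^4)*(w^2+(106/131)*w^4))
        + (391/13)*((z^3+(262/391)*z^5)*(w^3+(262/391)*w^5))
        + (548/131)*(z^4*w^4) + (1096/391)*(z^5*w^5) ) := by ring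
    have c1 : (1-10*w+12*w^2-16*w^3+12*w^4-6*w^5+2*w^6)
        = (starRingEnd ℂ) (1-10*z+12*z^2-16*z^3+12*z^4-6*z^5+2*z^6) := by
      simp [hw, map_ofNat]
    have c2 : (1+(8/5)*w^2+(3/5)*w^4) = (starRingEnd ℂ) (1+(8/5)*z^2+(3/5)*z^4) := by
      simp [hw, map_ofNat, map_div₀]
    have c3 : (w+(57/52)*w^3+(5/26)*w^5) = (starRingEnd ℂ) (z+(57/52)*z^3+(5/26)*z^5) := by
      simp [hw, map_ofNat, map_div₀]
    have c4 : (w^2+(106/131)*w^4) = (starRingEnd ℂ) (z^2+(106/131)*z^4) := by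
      simp [hw, map_ofNat, map_div₀]
    have c5 : (w^3+(262/391)*w^5) = (starRingEnd ℂ) (z^3+(262/391)*z^5) := by
      simp [hw, map_ofNat, map_div₀]
    rw [hz, hFw, c1, c2, c3, c4, c5,
      show w^4 = (starRingEnd ℂ) (z^4) by simp [hw],
      show w^5 = (starRingEnd ℂ) (z^5) by simp [hw],
      mul_conj, mul_conj, mul_conj, mul_conj, mul_conj, mul_conj, mul_conj,
      show z + w = ((2*z.re : ℝ) : ℂ) by rw [hw, Complex.add_conj]] at key
    push_cast at key
    have keyR : (0:ℝ) - normSq (1-10*z+12*z^2-16*z^3+12*z^4-6*z^5+2*z^6)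
        = (2*z.re) * ( 20 * normSq (1+(8/5)*z^2+(3/5)*z^4)
        + 208 * normSq (z+(57/52)*z^3+(5/26)*z^5)
        + (524/5) * normSq (z^2+(106/131)*z^4)
        + (391/13) * normSq (z^3+(262/391)*z^5)
        + (548/131) * normSq (z^4) + (1096/391) * normSq (z^5) ) := by
      apply Complex.ofReal_inj.mp
      push_cast
      linear_combination key
    have n0 := normSq_nonneg (1-10*z+12*z^2-16*z^3+12*z^4-6*z^5+2*z^6)
    have n1 := normSq_nonneg (1+(8/5)*z^2+(3/5)*z^4)
    have n2 := normSq_nonneg (z+(57/52)*z^3+(5/26)*z^5)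
    have n3 := normSq_nonneg (z^2+(106/131)*z^4)
    have n4 := normSq_nonneg (z^3+(262/391)*z^5)
    have n5 := normSq_nonneg (z^4)
    have n6 := normSq_nonneg (z^5)
    have h5 : normSq (z^4) = 0 := by nlinarith
    have hz4 : z^4 = 0 := normSq_eq_zero.mp h5
    have hz0 : z = 0 := by
      simpa using pow_eq_zero_iff (n := 4) (by norm_num) |>.mp hz4
    rw [hz0] at h0; simp at h0

set_option maxHeartbeats 1600000 in
theorem example_truncation_not_stable :
    HurwitzStable (Polynomial.C 1 + Polynomial.C 10 * Polynomial.X +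
        Polynomial.C 12 * Polynomial.X ^ 2 + Polynomial.C 16 * Polynomial.X ^ 3 +
        Polynomial.C 12 * Polynomial.X ^ 4 + Polynomial.C 6 * Polynomial.X ^ 5 +
        Polynomial.C 2 * Polynomial.X ^ 6) ∧
      ¬ HurwitzStable (Polynomial.C 1 + Polynomial.C 10 * Polynomial.X +
          Polynomial.C 12 * Polynomial.X ^ 2 + Polynomial.C 16 * Polynomial.X ^ 3 +
          Polynomial.C 12 * Polynomial.X ^ 4 + Polynomial.C 6 * Polynomial.X ^ 5) := by
  constructor
  · intro z hz
    apply stable_part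
    simp only [map_add, map_mul, map_pow, Polynomial.aeval_C, Polynomial.aeval_X] at hz
    push_cast at hz
    linear_combination hz
  · intro hS
    obtain ⟨A, hAmem, hAroot⟩ := intermediate_value_Icc (by norm_num : (3/100:ℝ) ≤ 4/100)
      (Continuous.continuousOn (by unfold resPoly; continuity))
      (show (0:ℝ) ∈ Set.Icc (resPoly (3/100)) (resPoly (4/100)) by
        rw [Set.mem_Icc]; constructor <;> norm_num [resPoly])
    obtain ⟨hA1, hA2⟩ := hAmem
    rw [show resPoly A = 108*A^11+972*A^10+4320*A^9+12312*A^8+24444*A^7+35190*A^6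
      +37610*A^5+30072*A^4+17436*A^3+6484*A^2+1069*A-43 from rfl] at hAroot
    have hDn : (0:ℝ) < 120+384*A+432*A^2+180*A^3 := by nlinarith
    obtain ⟨B, hB⟩ : ∃ b : ℝ,
        b = (114+264*A+336*A^2+336*A^3+216*A^4+72*A^5) / (120+384*A+432*A^2+180*A^3) := ⟨_, rfl⟩
    have hR1 : (120+384*A+432*A^2+180*A^3) * B = 114+264*A+336*A^2+336*A^3+216*A^4+72*A^5 := by
      rw [hB]; field_simp
    have hE2 : B * (12 + A*(16+A*(12+6*A)-6*B) - B*(12+6*A)) = 1 := by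
      have key2 : (B * (12 + A*(16+A*(12+6*A)-6*B) - B*(12+6*A)) - 1) * (120+384*A+432*A^2+180*A^3)^2
          = 144*(108*A^11+972*A^10+4320*A^9+12312*A^8+24444*A^7+35190*A^6
          +37610*A^5+30072*A^4+17436*A^3+6484*A^2+1069*A-43) := by
        rw [hB]; field_simp; ring
      rw [hAroot, mul_zero] at key2
      rcases mul_eq_zero.mp key2 with h | h
      · linarith
      · nlinarith
    have hE1 : -(A*(12 + A*(16+A*(12+6*A)-6*B) - B*(12+6*A))) + B*(16+A*(12+6*A)-6*B) - 10 = 0 := by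
      have hid : (-12-12*A) * (-(A*(12 + A*(16+A*(12+6*A)-6*B) - B*(12+6*A))) + B*(16+A*(12+6*A)-6*B) - 10)
          = (-((120+384*A+432*A^2+180*A^3)*B) + (114+264*A+336*A^2+336*A^3+216*A^4+72*A^5))
            + (-6)*(B*(12 + A*(16+A*(12+6*A)-6*B) - B*(12+6*A)) - 1) := by ring
      rw [hE2, hR1] at hid
      have h12 : (-12-12*A) ≠ 0 := by nlinarith
      have hz' : (-12-12*A) * (-(A*(12 + A*(16+A*(12+6*A)-6*B) - B*(12+6*A))) + B*(16+A*(12+6*A)-6*B) - 10) = 0 := by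
        rw [hid]; ring
      exact ((mul_eq_zero.mp hz').resolve_left h12)
    have hBge : B ≥ 1/2 := by
      rw [hB, ge_iff_le, le_div_iff₀ hDn]; nlinarith
    have ht0 : B - (A/2)^2 ≥ 0 := by nlinarith
    obtain ⟨t, htdef⟩ : ∃ u : ℝ, u = Real.sqrt (B - (A/2)^2) := ⟨_, rfl⟩
    have ht : t^2 = B - (A/2)^2 := by rw [htdef]; exact Real.sq_sqrt ht0
    obtain ⟨z, hzdef⟩ : ∃ w : ℂ, w = (↑(A/2) + ↑t * Complex.I) := ⟨_, rfl⟩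
    have htc : (t:ℂ)^2 = (B:ℂ) - ((A:ℂ)/2)^2 := by exact_mod_cast ht
    have hzq : z^2 - (A:ℂ)*z + (B:ℂ) = 0 := by
      rw [hzdef]; push_cast
      linear_combination ((t:ℂ)^2) * Complex.I_sq - htc
    have hE1c : -((A:ℂ)*(12 + A*(16+A*(12+6*A)-6*(B:ℂ)) - B*(12+6*A))) + (B:ℂ)*(16+A*(12+6*A)-6*B) - 10 = 0 := by
      exact_mod_cast hE1
    have hE2c : (B:ℂ) * (12 + (A:ℂ)*(16+A*(12+6*A)-6*(B:ℂ)) - B*(12+6*A)) = 1 := by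
      exact_mod_cast hE2
    have hroot : Polynomial.aeval z (Polynomial.C 1 + Polynomial.C 10 * Polynomial.X +
            Polynomial.C 12 * Polynomial.X ^ 2 + Polynomial.C 16 * Polynomial.X ^ 3 +
            Polynomial.C 12 * Polynomial.X ^ 4 + Polynomial.C 6 * Polynomial.X ^ 5 : Polynomial ℝ) = 0 := by
      simp only [map_add, map_mul, map_pow, Polynomial.aeval_C, Polynomial.aeval_X]
      push_cast
      have hfact : 1+10*z+12*z^2+16*z^3+12*z^4+6*z^5
          = (z^2 - (A:ℂ)*z + (B:ℂ)) * (6*z^3 + (12+6*(A:ℂ))*z^2 + (16+(A:ℂ)*(12+6*(A:ℂ))-6*(B:ℂ))*z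
              + (12 + (A:ℂ)*(16+(A:ℂ)*(12+6*(A:ℂ))-6*(B:ℂ)) - (B:ℂ)*(12+6*(A:ℂ)))) := by
        linear_combination (-z)*hE1c - hE2c
      rw [hfact, hzq, zero_mul]
    have hlt := hS z hroot
    have hzre : z.re = A/2 := by rw [hzdef]; simp
    rw [hzre] at hlt
    linarith
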